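/- Let G be an edge-maximal outerplane graph on n ≥ 4 vertices with outer cycle O, and let G' be the subgraph of G consisting only of the chords of O. Then G' has an independent set of size at least n/2 + 1. -/
import Mathlib

def PolyAdj (n : ℕ) (a b : Fin n) : Prop :=
  (a.val + 1) % n = b.val ∨ (b.val + 1) % n = a.val

def ChordCross {n : ℕ} (a b c d : Fin n) : Prop :=
  (a < c ∧ c < b ∧ b < d) ∨ (c < a ∧ a < d ∧ d < b)

structure MaxOuterplanar (n : ℕ) where
  chord : Fin n → Fin n → Prop
  lt_of_chord : ∀ a b, chord a b → a < b
  not_poly : ∀ a b, chord a b → ¬ PolyAdj n a b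
  noncross : ∀ a b c d, chord a b → chord c d → ¬ ChordCross a b c d
  maximal : ∀ a b : Fin n, a < b → ¬ PolyAdj n a b → ¬ chord a b →
    ∃ c d, chord c d ∧ ChordCross a b c d

namespace StmtAux

def NCross (a b c d : ℕ) : Prop :=
  (a < c ∧ c < b ∧ b < d) ∨ (c < a ∧ a < d ∧ d < b)

structure Poly (n : ℕ) where
  E : ℕ → ℕ → Prop
  gap : ∀ a b, E a b → a + 2 ≤ b ∧ b + 1 ≤ n
  nowrap : ∀ a b, E a b → ¬(a = 0 ∧ b = n - 1)
  noncross : ∀ a b c d, E a b → E c d → ¬ NCross a b c d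
  maximal : ∀ a b, a + 2 ≤ b → b + 1 ≤ n → ¬(a = 0 ∧ b = n - 1) → ¬ E a b →
    ∃ c d, E c d ∧ NCross a b c d

variable {n : ℕ}

def Ind (P : Poly n) (S : Finset ℕ) : Prop := ∀ x ∈ S, ∀ y ∈ S, ¬ P.E x y

/-- Triangle lemma: every chord has an apex on its inner side. -/
lemma triangle (P : Poly n) {l r : ℕ} (h : P.E l r) :
    ∃ c, l < c ∧ c < r ∧ (P.E l c ∨ c = l + 1) ∧ (P.E c r ∨ r = c + 1) := by
  classical
  obtain ⟨hg, hrn⟩ := P.gap l r h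
  have hne : (l+1) ∈ (Finset.Ico (l+1) r).filter (fun c => P.E l c ∨ c = l + 1) :=
    Finset.mem_filter.2 ⟨Finset.mem_Ico.2 ⟨le_refl _, by omega⟩, Or.inr rfl⟩
  obtain ⟨c, hcT, hmax⟩ :=
    Finset.exists_max_image _ id ⟨l+1, hne⟩
  obtain ⟨hcIco, h1⟩ := Finset.mem_filter.1 hcT
  obtain ⟨hc1, hc2⟩ := Finset.mem_Ico.1 hcIco
  refine ⟨c, by omega, hc2, h1, ?_⟩
  by_contra h2
  push_neg at h2
  obtain ⟨hnE, hne2⟩ := h2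
  obtain ⟨x, y, hxy, hX⟩ := P.maximal c r (by omega) (by omega) (by omega) hnE
  have hgxy := P.gap x y hxy
  rcases hX with ⟨ha, hb, hc⟩ | ⟨ha, hb, hc⟩
  · exact P.noncross l r x y h hxy (Or.inl ⟨by omega, by omega, by omega⟩)
  · rcases lt_trichotomy x l with hxl | hxl | hxl
    · exact P.noncross l r x y h hxy (Or.inr ⟨hxl, by omega, by omega⟩)
    · subst hxl
      have hyT : y ∈ (Finset.Ico (x+1) r).filter (fun c => P.E x c ∨ c = x + 1) :=
        Finset.mem_filter.2 ⟨Finset.mem_Ico.2 ⟨by omega, hc⟩, Or.inl hxy⟩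
      have := hmax y hyT
      simp only [id] at this
      omega
    · rcases h1 with h1 | h1
      · exact P.noncross l c x y h1 hxy (Or.inl ⟨hxl, ha, hb⟩)
      · omega

lemma cross_core (P : Poly n) {l c r x y : ℕ} (hlc : l < c) (hcr : c < r)
    (h1 : P.E l c ∨ c = l + 1) (h2 : P.E c r ∨ r = c + 1)
    (hx1 : l ≤ x) (hx2 : x ≤ c) (hy1 : c ≤ y) (hy2 : y ≤ r)
    (hxy : P.E x y) : x = c ∨ y = c ∨ (x = l ∧ y = r) := by
  by_cases hxc : x = c
  · exact Or.inl hxc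
  by_cases hyc : y = c
  · exact Or.inr (Or.inl hyc)
  by_cases hxl : x = l
  · by_cases hyr : y = r
    · exact Or.inr (Or.inr ⟨hxl, hyr⟩)
    · exfalso
      rcases h2 with h2 | h2
      · exact P.noncross c r x y h2 hxy
          (Or.inr ⟨by omega, by omega, by omega⟩)
      · omega
  · exfalso
    rcases h1 with h1 | h1
    · exact P.noncross l c x y h1 hxy (Or.inl ⟨by omega, by omega, by omega⟩)
    · omega

lemma union_core (P : Poly n) {l c r : ℕ} (hlc : l < c) (hcr : c < r)
    (h1 : P.E l c ∨ c = l + 1) (h2 : P.E c r ∨ r = c + 1) {S1 S2 : Finset ℕ}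
    (hS1 : S1 ⊆ Finset.Icc l c) (hS2 : S2 ⊆ Finset.Icc c r)
    (hI1 : Ind P S1) (hI2 : Ind P S2)
    (hc1 : c ∉ S1) (hc2 : c ∉ S2) (hlr : l ∉ S1 ∨ r ∉ S2) :
    (S1 ∪ S2) ⊆ Finset.Icc l r ∧ Ind P (S1 ∪ S2) ∧
      (S1 ∪ S2).card = S1.card + S2.card := by
  classical
  refine ⟨?_, ?_, ?_⟩
  · intro x hx
    rcases Finset.mem_union.1 hx with hx | hx
    · have := hS1 hx; simp only [Finset.mem_Icc] at this ⊢; omega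
    · have := hS2 hx; simp only [Finset.mem_Icc] at this ⊢; omega
  · intro x hx y hy hxy
    rcases Finset.mem_union.1 hx with hx' | hx' <;> rcases Finset.mem_union.1 hy with hy' | hy'
    · exact hI1 x hx' y hy' hxy
    · have hxm := hS1 hx'; have hym := hS2 hy'
      simp only [Finset.mem_Icc] at hxm hym
      rcases cross_core P hlc hcr h1 h2 hxm.1 hxm.2 hym.1 hym.2 hxy with h | h | ⟨h, h'⟩
      · exact hc1 (h ▸ hx')
      · exact hc2 (h ▸ hy')
      · rcases hlr with hl | hr
        · exact hl (h ▸ hx')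
        · exact hr (h' ▸ hy')
    · have hxm := hS2 hx'; have hym := hS1 hy'
      simp only [Finset.mem_Icc] at hxm hym
      have := P.gap x y hxy
      omega
    · exact hI2 x hx' y hy' hxy
  · refine Finset.card_union_of_disjoint ?_
    rw [Finset.disjoint_left]
    intro x hx1 hx2
    have h1m := hS1 hx1; have h2m := hS2 hx2
    simp only [Finset.mem_Icc] at h1m h2m
    have : x = c := by omega
    exact hc1 (this ▸ hx1)

lemma insertR_core (P : Poly n) {l c r : ℕ} (hlc : l < c) (h1 : P.E l c) (hrc : r = c + 1)
    {S1 : Finset ℕ} (hS1 : S1 ⊆ Finset.Icc l c) (hI1 : Ind P S1) (hl : l ∉ S1) :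
    (insert r S1) ⊆ Finset.Icc l r ∧ Ind P (insert r S1) ∧
      (insert r S1).card = S1.card + 1 := by
  classical
  have hrnot : r ∉ S1 := fun hmem => by
    have := hS1 hmem; simp only [Finset.mem_Icc] at this; omega
  refine ⟨?_, ?_, Finset.card_insert_of_notMem hrnot⟩
  · intro x hx
    rcases Finset.mem_insert.1 hx with h | h
    · subst h; simp only [Finset.mem_Icc]; omega
    · have := hS1 h; simp only [Finset.mem_Icc] at this ⊢; omega
  · intro x hx y hy hxy
    have hgxy := P.gap x y hxy
    rcases Finset.mem_insert.1 hx with hx' | hx' <;> rcases Finset.mem_insert.1 hy with hy' | hy'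
    · omega
    · have := hS1 hy'; simp only [Finset.mem_Icc] at this; omega
    · -- x ∈ S1, y = r
      subst hy'
      have hxm := hS1 hx'; simp only [Finset.mem_Icc] at hxm
      have hxl : l < x := by
        rcases eq_or_lt_of_le hxm.1 with h | h
        · exact absurd (h ▸ hx') hl
        · exact h
      have hxcne : x < c := by omega
      exact P.noncross l c x y h1 hxy (Or.inl ⟨hxl, hxcne, by omega⟩)
    · exact hI1 x hx' y hy' hxy

lemma insertL_core (P : Poly n) {l c r : ℕ} (hcr : c < r) (h2 : P.E c r) (hcl : c = l + 1)
    {S2 : Finset ℕ} (hS2 : S2 ⊆ Finset.Icc c r) (hI2 : Ind P S2) (hr : r ∉ S2) :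
    (insert l S2) ⊆ Finset.Icc l r ∧ Ind P (insert l S2) ∧
      (insert l S2).card = S2.card + 1 := by
  classical
  have hlnot : l ∉ S2 := fun hmem => by
    have := hS2 hmem; simp only [Finset.mem_Icc] at this; omega
  refine ⟨?_, ?_, Finset.card_insert_of_notMem hlnot⟩
  · intro x hx
    rcases Finset.mem_insert.1 hx with h | h
    · subst h; simp only [Finset.mem_Icc]; omega
    · have := hS2 h; simp only [Finset.mem_Icc] at this ⊢; omega
  · intro x hx y hy hxy
    have hgxy := P.gap x y hxy
    rcases Finset.mem_insert.1 hx with hx' | hx' <;> rcases Finset.mem_insert.1 hy with hy' | hy'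
    · omega
    · -- x = l, y ∈ S2
      subst hx'
      have hym := hS2 hy'; simp only [Finset.mem_Icc] at hym
      have hyr : y < r := by
        rcases eq_or_lt_of_le hym.2 with h | h
        · exact absurd (h ▸ hy') hr
        · exact h
      have hcy : c < y := by omega
      exact P.noncross c r x y h2 hxy (Or.inr ⟨by omega, hcy, hyr⟩)
    · have := hS2 hx'; simp only [Finset.mem_Icc] at this; omega
    · exact hI2 x hx' y hy' hxy


variable {n : ℕ}

/-- The four interval statements, proved jointly by strong induction on width.
For an interval `[l,r]` closed by a chord `(l,r)` (with `t = r-l+1` vertices):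
F : independent set with `2|S| ≥ t+1`;
HL : avoiding `l`, `2|S| ≥ t`;
HR : avoiding `r`, `2|S| ≥ t`;
H2 : avoiding both, `2|S| ≥ t-1`. -/
lemma quad (P : Poly n) : ∀ d l r, r - l ≤ d → P.E l r →
    (∃ S : Finset ℕ, S ⊆ Finset.Icc l r ∧ Ind P S ∧ r - l + 2 ≤ 2 * S.card) ∧
    (∃ S : Finset ℕ, S ⊆ Finset.Icc l r ∧ Ind P S ∧ l ∉ S ∧ r - l + 1 ≤ 2 * S.card) ∧
    (∃ S : Finset ℕ, S ⊆ Finset.Icc l r ∧ Ind P S ∧ r ∉ S ∧ r - l + 1 ≤ 2 * S.card) ∧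
    (∃ S : Finset ℕ, S ⊆ Finset.Icc l r ∧ Ind P S ∧ l ∉ S ∧ r ∉ S ∧ r - l ≤ 2 * S.card) := by
  classical
  intro d
  induction d with
  | zero =>
    intro l r hle hE
    have := P.gap l r hE
    omega
  | succ d ih =>
    intro l r hd hE
    have hg := P.gap l r hE
    obtain ⟨c, hlc, hcr, h1, h2⟩ := triangle P hE
    rcases h1 with h1 | h1
    · have hg1 := P.gap l c h1
      rcases h2 with h2 | h2
      · -- CASE A : both sides chords
        have hg2 := P.gap c r h2
        obtain ⟨F1, HL1, HR1, H21⟩ := ih l c (by omega) h1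
        obtain ⟨F2, HL2, HR2, H22⟩ := ih c r (by omega) h2
        refine ⟨?_, ?_, ?_, ?_⟩
        · -- F
          rcases Nat.even_or_odd (r - c) with hpar | hpar
          · -- r - c even : combo H2₁ ⊗ HL₂
            obtain ⟨S1, hs1, hi1, hl1, hc1, hb1⟩ := H21
            obtain ⟨S2, hs2, hi2, hc2, hb2⟩ := HL2
            obtain ⟨hsub, hind, hcard⟩ :=
              union_core P hlc hcr (Or.inl h1) (Or.inl h2) hs1 hs2 hi1 hi2 hc1 hc2 (Or.inl hl1)
            obtain ⟨k, hk⟩ := hpar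
            exact ⟨S1 ∪ S2, hsub, hind, by omega⟩
          · -- r - c odd : combo HR₁ ⊗ H2₂
            obtain ⟨S1, hs1, hi1, hc1, hb1⟩ := HR1
            obtain ⟨S2, hs2, hi2, hc2, hr2, hb2⟩ := H22
            obtain ⟨hsub, hind, hcard⟩ :=
              union_core P hlc hcr (Or.inl h1) (Or.inl h2) hs1 hs2 hi1 hi2 hc1 hc2 (Or.inr hr2)
            obtain ⟨k, hk⟩ := hpar
            exact ⟨S1 ∪ S2, hsub, hind, by omega⟩
        · -- HL : combo H2₁ ⊗ HL₂
          obtain ⟨S1, hs1, hi1, hl1, hc1, hb1⟩ := H21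
          obtain ⟨S2, hs2, hi2, hc2, hb2⟩ := HL2
          obtain ⟨hsub, hind, hcard⟩ :=
            union_core P hlc hcr (Or.inl h1) (Or.inl h2) hs1 hs2 hi1 hi2 hc1 hc2 (Or.inl hl1)
          refine ⟨S1 ∪ S2, hsub, hind, ?_, by omega⟩
          intro hmem
          rcases Finset.mem_union.1 hmem with h | h
          · exact hl1 h
          · have := hs2 h; simp only [Finset.mem_Icc] at this; omega
        · -- HR : combo HR₁ ⊗ H2₂
          obtain ⟨S1, hs1, hi1, hc1, hb1⟩ := HR1
          obtain ⟨S2, hs2, hi2, hc2, hr2, hb2⟩ := H22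
          obtain ⟨hsub, hind, hcard⟩ :=
            union_core P hlc hcr (Or.inl h1) (Or.inl h2) hs1 hs2 hi1 hi2 hc1 hc2 (Or.inr hr2)
          refine ⟨S1 ∪ S2, hsub, hind, ?_, by omega⟩
          intro hmem
          rcases Finset.mem_union.1 hmem with h | h
          · have := hs1 h; simp only [Finset.mem_Icc] at this; omega
          · exact hr2 h
        · -- H2 : combo H2₁ ⊗ H2₂
          obtain ⟨S1, hs1, hi1, hl1, hc1, hb1⟩ := H21
          obtain ⟨S2, hs2, hi2, hc2, hr2, hb2⟩ := H22
          obtain ⟨hsub, hind, hcard⟩ :=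
            union_core P hlc hcr (Or.inl h1) (Or.inl h2) hs1 hs2 hi1 hi2 hc1 hc2 (Or.inr hr2)
          refine ⟨S1 ∪ S2, hsub, hind, ?_, ?_, by omega⟩
          · intro hmem
            rcases Finset.mem_union.1 hmem with h | h
            · exact hl1 h
            · have := hs2 h; simp only [Finset.mem_Icc] at this; omega
          · intro hmem
            rcases Finset.mem_union.1 hmem with h | h
            · have := hs1 h; simp only [Finset.mem_Icc] at this; omega
            · exact hr2 h
      · -- CASE B : E l c, r = c + 1
        obtain ⟨F1, HL1, HR1, H21⟩ := ih l c (by omega) h1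
        refine ⟨?_, ?_, ?_, ?_⟩
        · obtain ⟨S1, hs1, hi1, hl1, hb1⟩ := HL1
          obtain ⟨hsub, hind, hcard⟩ := insertR_core P hlc h1 h2 hs1 hi1 hl1
          exact ⟨insert r S1, hsub, hind, by omega⟩
        · obtain ⟨S1, hs1, hi1, hl1, hc1, hb1⟩ := H21
          obtain ⟨hsub, hind, hcard⟩ := insertR_core P hlc h1 h2 hs1 hi1 hl1
          refine ⟨insert r S1, hsub, hind, ?_, by omega⟩
          intro hmem
          rcases Finset.mem_insert.1 hmem with h | h
          · omega
          · exact hl1 h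
        · obtain ⟨S1, hs1, hi1, hb1⟩ := F1
          refine ⟨S1, ?_, hi1, ?_, by omega⟩
          · intro x hx; have := hs1 hx; simp only [Finset.mem_Icc] at this ⊢; omega
          · intro hmem; have := hs1 hmem; simp only [Finset.mem_Icc] at this; omega
        · obtain ⟨S1, hs1, hi1, hl1, hb1⟩ := HL1
          refine ⟨S1, ?_, hi1, hl1, ?_, by omega⟩
          · intro x hx; have := hs1 hx; simp only [Finset.mem_Icc] at this ⊢; omega
          · intro hmem; have := hs1 hmem; simp only [Finset.mem_Icc] at this; omega
    · rcases h2 with h2 | h2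
      · -- CASE C : c = l + 1, E c r
        have hg2 := P.gap c r h2
        obtain ⟨F2, HL2, HR2, H22⟩ := ih c r (by omega) h2
        refine ⟨?_, ?_, ?_, ?_⟩
        · obtain ⟨S2, hs2, hi2, hr2, hb2⟩ := HR2
          obtain ⟨hsub, hind, hcard⟩ := insertL_core P hcr h2 h1 hs2 hi2 hr2
          exact ⟨insert l S2, hsub, hind, by omega⟩
        · obtain ⟨S2, hs2, hi2, hb2⟩ := F2
          refine ⟨S2, ?_, hi2, ?_, by omega⟩
          · intro x hx; have := hs2 hx; simp only [Finset.mem_Icc] at this ⊢; omega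
          · intro hmem; have := hs2 hmem; simp only [Finset.mem_Icc] at this; omega
        · obtain ⟨S2, hs2, hi2, hc2, hr2, hb2⟩ := H22
          obtain ⟨hsub, hind, hcard⟩ := insertL_core P hcr h2 h1 hs2 hi2 hr2
          refine ⟨insert l S2, hsub, hind, ?_, by omega⟩
          intro hmem
          rcases Finset.mem_insert.1 hmem with h | h
          · omega
          · exact hr2 h
        · obtain ⟨S2, hs2, hi2, hr2, hb2⟩ := HR2
          refine ⟨S2, ?_, hi2, ?_, hr2, by omega⟩
          · intro x hx; have := hs2 hx; simp only [Finset.mem_Icc] at this ⊢; omega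
          · intro hmem; have := hs2 hmem; simp only [Finset.mem_Icc] at this; omega
      · -- CASE D : r = l + 2
        have hr2 : r = l + 2 := by omega
        have hpair : ∀ (a b : ℕ), a ∈ Finset.Icc l r → b ∈ Finset.Icc l r →
            b ≤ a + 1 → ¬ P.E a b := by
          intro a b _ _ hab hEab
          have := P.gap a b hEab
          omega
        refine ⟨⟨{l, l+1}, ?_, ?_, ?_⟩, ⟨{l+1, r}, ?_, ?_, ?_, ?_⟩,
            ⟨{l, l+1}, ?_, ?_, ?_, ?_⟩, ⟨{l+1}, ?_, ?_, ?_, ?_, ?_⟩⟩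
        · intro x hx; simp only [Finset.mem_insert, Finset.mem_singleton] at hx
          simp only [Finset.mem_Icc]; omega
        · intro x hx y hy hxy
          simp only [Finset.mem_insert, Finset.mem_singleton] at hx hy
          have := P.gap x y hxy; omega
        · have : l ∉ ({l+1} : Finset ℕ) := by simp
          rw [Finset.card_insert_of_notMem this, Finset.card_singleton]; omega
        · intro x hx; simp only [Finset.mem_insert, Finset.mem_singleton] at hx
          simp only [Finset.mem_Icc]; omega
        · intro x hx y hy hxy
          simp only [Finset.mem_insert, Finset.mem_singleton] at hx hy
          have := P.gap x y hxy; omega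
        · simp only [Finset.mem_insert, Finset.mem_singleton]; omega
        · have : l + 1 ∉ ({r} : Finset ℕ) := by simp; omega
          rw [Finset.card_insert_of_notMem this, Finset.card_singleton]; omega
        · intro x hx; simp only [Finset.mem_insert, Finset.mem_singleton] at hx
          simp only [Finset.mem_Icc]; omega
        · intro x hx y hy hxy
          simp only [Finset.mem_insert, Finset.mem_singleton] at hx hy
          have := P.gap x y hxy; omega
        · simp only [Finset.mem_insert, Finset.mem_singleton]; omega
        · have : l ∉ ({l+1} : Finset ℕ) := by simp
          rw [Finset.card_insert_of_notMem this, Finset.card_singleton]; omega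
        · intro x hx; simp only [Finset.mem_singleton] at hx
          simp only [Finset.mem_Icc]; omega
        · intro x hx y hy hxy
          simp only [Finset.mem_singleton] at hx hy
          have := P.gap x y hxy; omega
        · simp only [Finset.mem_singleton]; omega
        · simp only [Finset.mem_singleton]; omega
        · rw [Finset.card_singleton]; omega


variable {n : ℕ}

/-- Rotate the polygon by one step: vertex `x` of the new polygon corresponds to
vertex `x-1` of the old one (and `0` corresponds to `n-1`). -/
def RotE (P : Poly n) (a b : ℕ) : Prop :=
  (a = 0 ∧ P.E (b-1) (n-1)) ∨ (1 ≤ a ∧ b ≤ n - 1 ∧ P.E (a-1) (b-1))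

def Rot (P : Poly n) : Poly n where
  E := RotE P
  gap := by
    intro a b h
    rcases h with ⟨ha, hE⟩ | ⟨ha, hb, hE⟩
    · have hg := P.gap _ _ hE
      have hw := P.nowrap _ _ hE
      have hb1 : b - 1 ≠ 0 := by
        intro h0
        exact hw ⟨h0, rfl⟩
      omega
    · have hg := P.gap _ _ hE
      omega
  nowrap := by
    intro a b h hab
    obtain ⟨ha0, hb1⟩ := hab
    rcases h with ⟨_, hE⟩ | ⟨ha, _, _⟩
    · have hg := P.gap _ _ hE
      have hw := P.nowrap _ _ hE
      have hb1' : b - 1 ≠ 0 := fun h0 => hw ⟨h0, rfl⟩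
      omega
    · omega
  noncross := by
    intro a b c d hab hcd hX
    rcases hab with ⟨ha0, hE1⟩ | ⟨ha1, hb1, hE1⟩ <;>
      rcases hcd with ⟨hc0, hE2⟩ | ⟨hc1, hd1, hE2⟩
    · rcases hX with ⟨h, _, _⟩ | ⟨h, _, _⟩ <;> omega
    · have g1 := P.gap _ _ hE1
      have g2 := P.gap _ _ hE2
      have w1 : b - 1 ≠ 0 := fun h0 => P.nowrap _ _ hE1 ⟨h0, rfl⟩
      refine P.noncross _ _ _ _ hE2 hE1 ?_
      rcases hX with ⟨hx1, hx2, hx3⟩ | ⟨hx1, hx2, hx3⟩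
      · exact Or.inl ⟨by omega, by omega, by omega⟩
      · omega
    · have g1 := P.gap _ _ hE1
      have g2 := P.gap _ _ hE2
      have w2 : d - 1 ≠ 0 := fun h0 => P.nowrap _ _ hE2 ⟨h0, rfl⟩
      refine P.noncross _ _ _ _ hE1 hE2 ?_
      rcases hX with ⟨hx1, hx2, hx3⟩ | ⟨hx1, hx2, hx3⟩
      · omega
      · exact Or.inl ⟨by omega, by omega, by omega⟩
    · have g1 := P.gap _ _ hE1
      have g2 := P.gap _ _ hE2
      refine P.noncross _ _ _ _ hE1 hE2 ?_
      rcases hX with ⟨hx1, hx2, hx3⟩ | ⟨hx1, hx2, hx3⟩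
      · exact Or.inl ⟨by omega, by omega, by omega⟩
      · exact Or.inr ⟨by omega, by omega, by omega⟩
  maximal := by
    intro a b hab hbn hnw hnE
    by_cases ha : 1 ≤ a
    · have hnE' : ¬ P.E (a-1) (b-1) := fun hE => hnE (Or.inr ⟨ha, by omega, hE⟩)
      obtain ⟨x, y, hxy, hX⟩ :=
        P.maximal (a-1) (b-1) (by omega) (by omega) (by omega) hnE'
      have gxy := P.gap x y hxy
      by_cases hy : y ≤ n - 2
      · refine ⟨x+1, y+1, Or.inr ⟨by omega, by omega, by simpa using hxy⟩, ?_⟩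
        rcases hX with ⟨h1', h2', h3'⟩ | ⟨h1', h2', h3'⟩
        · exact Or.inl ⟨by omega, by omega, by omega⟩
        · exact Or.inr ⟨by omega, by omega, by omega⟩
      · have hy' : y = n - 1 := by omega
        refine ⟨0, x+1, Or.inl ⟨rfl, by rw [Nat.add_sub_cancel, ← hy']; exact hxy⟩, ?_⟩
        rcases hX with ⟨h1', h2', h3'⟩ | ⟨h1', h2', h3'⟩
        · exact Or.inr ⟨by omega, by omega, by omega⟩
        · omega
    · have ha0 : a = 0 := by omega
      have hnE' : ¬ P.E (b-1) (n-1) := fun hE => hnE (Or.inl ⟨ha0, hE⟩)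
      obtain ⟨x, y, hxy, hX⟩ :=
        P.maximal (b-1) (n-1) (by omega) (by omega) (by omega) hnE'
      have gxy := P.gap x y hxy
      have hX' : x < b - 1 ∧ b - 1 < y ∧ y < n - 1 := by
        rcases hX with ⟨h1', h2', h3'⟩ | ⟨h1', h2', h3'⟩
        · omega
        · exact ⟨h1', h2', h3'⟩
      refine ⟨x+1, y+1, Or.inr ⟨by omega, by omega, by simpa using hxy⟩, ?_⟩
      exact Or.inl ⟨by omega, by omega, by omega⟩

def EarAt (P : Poly n) (v : ℕ) : Prop :=
  1 ≤ v ∧ v ≤ n - 2 ∧ P.E (v-1) (v+1) ∧ ∀ x y, P.E x y → x ≠ v ∧ y ≠ v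

def Terminal (P : Poly n) : Prop :=
  P.E 0 (n-2) ∧ ∀ x y, P.E x y → x ≠ n-1 ∧ y ≠ n-1

lemma earAt_step (P : Poly n) {v : ℕ} (h : EarAt P v) (hv : v ≤ n - 3) :
    EarAt (Rot P) (v+1) := by
  obtain ⟨hv1, hv2, hch, hfree⟩ := h
  have hgch := P.gap _ _ hch
  refine ⟨by omega, by omega, ?_, ?_⟩
  · show RotE P (v+1-1) (v+1+1)
    refine Or.inr ⟨by omega, by omega, ?_⟩
    have e2 : v + 1 - 1 - 1 = v - 1 := by omega
    have e3 : v + 1 + 1 - 1 = v + 1 := by omega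
    rw [e2, e3]
    exact hch
  · intro x y hxy
    rcases hxy with ⟨hx0, hE⟩ | ⟨hx1, hy1, hE⟩
    · have := (hfree _ _ hE).1
      constructor
      · omega
      · omega
    · have := hfree _ _ hE
      constructor
      · omega
      · omega

lemma earAt_last (P : Poly n) (hn : 4 ≤ n) (h : EarAt P (n-2)) : Terminal (Rot P) := by
  obtain ⟨hv1, hv2, hch, hfree⟩ := h
  have hgch := P.gap _ _ hch
  constructor
  · show RotE P 0 (n-2)
    refine Or.inl ⟨rfl, ?_⟩
    have e : n - 2 - 1 = n - 3 := by omega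
    rw [e]
    have e2 : n - 2 - 1 = n - 3 := by omega
    have e3 : n - 2 + 1 = n - 1 := by omega
    rw [e2, e3] at hch
    exact hch
  · intro x y hxy
    rcases hxy with ⟨hx0, hE⟩ | ⟨hx1, hy1, hE⟩
    · have hg := P.gap _ _ hE
      have := (hfree _ _ hE).1
      constructor
      · omega
      · intro hyn
        -- y = n-1 : would give P.E (n-2) (n-1), impossible by gap
        omega
    · have hg := P.gap _ _ hE
      have := hfree _ _ hE
      constructor
      · omega
      · omega

lemma earAt_iter (P : Poly n) (hn : 4 ≤ n) {v : ℕ} (h : EarAt P v) :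
    Terminal (Rot^[n-1-v] P) := by
  have hv1 := h.1
  have hv2 := h.2.1
  have key : ∀ j, v + j ≤ n-2 → EarAt (Rot^[j] P) (v + j) := by
    intro j
    induction j with
    | zero => intro _; simpa using h
    | succ j ihj =>
      intro hj
      have prev := ihj (by omega)
      have step := earAt_step (Rot^[j] P) prev (by omega)
      rw [Function.iterate_succ_apply']
      have e : v + (j + 1) = v + j + 1 := by omega
      rw [e]
      exact step
  have hfin := key (n-2-v) (by omega)
  have heq : v + (n-2-v) = n-2 := by omega
  rw [heq] at hfin
  have hterm := earAt_last (Rot^[n-2-v] P) hn hfin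
  have e2 : n-1-v = (n-2-v) + 1 := by omega
  rw [e2, Function.iterate_succ_apply']
  exact hterm

lemma exists_ear (P : Poly n) (hn : 4 ≤ n) : ∃ v, EarAt P v := by
  classical
  have hex : ∃ a b, P.E a b := by
    by_cases h02 : P.E 0 2
    · exact ⟨0, 2, h02⟩
    · obtain ⟨c, d, hcd, _⟩ := P.maximal 0 2 (by omega) (by omega) (by omega) h02
      exact ⟨c, d, hcd⟩
  obtain ⟨a0, b0, hab0⟩ := hex
  have hg0 := P.gap _ _ hab0
  set A := (Finset.range n ×ˢ Finset.range n).filter (fun p => P.E p.1 p.2) with hA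
  have hmemA : (a0, b0) ∈ A := by
    simp only [hA, Finset.mem_filter, Finset.mem_product, Finset.mem_range]
    exact ⟨⟨by omega, by omega⟩, hab0⟩
  obtain ⟨p, hpA, hmin⟩ := Finset.exists_min_image A (fun p => p.2 - p.1) ⟨_, hmemA⟩
  obtain ⟨a, b⟩ := p
  simp only [hA, Finset.mem_filter, Finset.mem_product, Finset.mem_range] at hpA
  obtain ⟨⟨han, hbn⟩, hab⟩ := hpA
  have hg := P.gap _ _ hab
  obtain ⟨c, hlc, hcr, h1, h2⟩ := triangle P hab
  have hb2 : b = a + 2 := by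
    rcases h1 with h1 | h1
    · exfalso
      have hmem : (a, c) ∈ A := by
        simp only [hA, Finset.mem_filter, Finset.mem_product, Finset.mem_range]
        exact ⟨⟨by omega, by omega⟩, h1⟩
      have := hmin _ hmem
      simp only at this
      omega
    · rcases h2 with h2 | h2
      · exfalso
        have hmem : (c, b) ∈ A := by
          simp only [hA, Finset.mem_filter, Finset.mem_product, Finset.mem_range]
          exact ⟨⟨by omega, by omega⟩, h2⟩
        have := hmin _ hmem
        simp only at this
        omega
      · omega
  refine ⟨a+1, by omega, by omega, ?_, ?_⟩
  · have e1 : a + 1 - 1 = a := by omega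
    rw [e1, ← hb2]
    exact hab
  · intro x y hxy
    have hgxy := P.gap _ _ hxy
    constructor
    · intro hxv
      subst hxv
      exact P.noncross a b (a+1) y hab hxy (Or.inl ⟨by omega, by omega, by omega⟩)
    · intro hyv
      subst hyv
      exact P.noncross a b x (a+1) hab hxy (Or.inr ⟨by omega, by omega, by omega⟩)

def GoodSet (P : Poly n) : Prop :=
  ∃ S : Finset ℕ, (∀ x ∈ S, x < n) ∧ Ind P S ∧ n + 2 ≤ 2 * S.card

lemma terminal_good (P : Poly n) (hn : 4 ≤ n) (h : Terminal P) : GoodSet P := by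
  classical
  obtain ⟨hE, hfree⟩ := h
  obtain ⟨S, hsub, hind, hcard⟩ := (quad P (n-2) 0 (n-2) (by omega) hE).1
  have hnot : (n-1) ∉ S := fun hmem => by
    have := hsub hmem; simp only [Finset.mem_Icc] at this; omega
  refine ⟨insert (n-1) S, ?_, ?_, ?_⟩
  · intro x hx
    rcases Finset.mem_insert.1 hx with h | h
    · omega
    · have := hsub h; simp only [Finset.mem_Icc] at this; omega
  · intro x hx y hy hxy
    rcases Finset.mem_insert.1 hx with hx' | hx'
    · exact (hfree _ _ hxy).1 hx'
    · rcases Finset.mem_insert.1 hy with hy' | hy'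
      · exact (hfree _ _ hxy).2 hy'
      · exact hind x hx' y hy' hxy
  · rw [Finset.card_insert_of_notMem hnot]
    omega

lemma good_of_rot (P : Poly n) (hn : 4 ≤ n) (h : GoodSet (Rot P)) : GoodSet P := by
  classical
  obtain ⟨S, hlt, hind, hcard⟩ := h
  refine ⟨S.image (fun x => if x = 0 then n-1 else x - 1), ?_, ?_, ?_⟩
  · intro x hx
    simp only [Finset.mem_image] at hx
    obtain ⟨y, hy, rfl⟩ := hx
    have := hlt y hy
    split <;> omega
  · intro u hu w hw hE
    simp only [Finset.mem_image] at hu hw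
    obtain ⟨x, hx, hxe⟩ := hu
    obtain ⟨y, hy, hye⟩ := hw
    have hxn := hlt x hx
    have hyn := hlt y hy
    have hgE := P.gap _ _ hE
    by_cases hx0 : x = 0 <;> by_cases hy0 : y = 0
    · rw [if_pos hx0] at hxe
      rw [if_pos hy0] at hye
      omega
    · rw [if_pos hx0] at hxe
      rw [if_neg hy0] at hye
      omega
    · rw [if_neg hx0] at hxe
      rw [if_pos hy0] at hye
      refine hind y hy x hx (Or.inl ⟨hy0, ?_⟩)
      rw [hxe, hye]
      exact hE
    · rw [if_neg hx0] at hxe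
      rw [if_neg hy0] at hye
      refine hind x hx y hy (Or.inr ⟨by omega, by omega, ?_⟩)
      rw [hxe, hye]
      exact hE
  · rw [Finset.card_image_of_injOn]
    · omega
    · intro x hx y hy hxy
      have hx' := hlt x hx
      have hy' := hlt y hy
      simp only at hxy
      by_cases hx0 : x = 0 <;> by_cases hy0 : y = 0
      · omega
      · rw [if_pos hx0, if_neg hy0] at hxy; omega
      · rw [if_neg hx0, if_pos hy0] at hxy; omega
      · rw [if_neg hx0, if_neg hy0] at hxy; omega

lemma good_of_rot_iter (hn : 4 ≤ n) :
    ∀ (k : ℕ) (P : Poly n), GoodSet (Rot^[k] P) → GoodSet P := by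
  intro k
  induction k with
  | zero => intro P h; simpa using h
  | succ k ihk =>
    intro P h
    rw [Function.iterate_succ_apply] at h
    exact good_of_rot P hn (ihk (Rot P) h)

lemma poly_good (P : Poly n) (hn : 4 ≤ n) : GoodSet P := by
  obtain ⟨v, hear⟩ := exists_ear P hn
  exact good_of_rot_iter hn (n-1-v) P (terminal_good _ hn (earAt_iter P hn hear))

end StmtAux

theorem stmt_11 (n : ℕ) (hn : 4 ≤ n) (M : MaxOuterplanar n) :
    ∃ S : Finset (Fin n),
      (∀ a ∈ S, ∀ b ∈ S, ¬ M.chord a b) ∧ n + 2 ≤ 2 * S.card := by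
  classical
  have hadj : ∀ (a b : Fin n), a.val + 1 = b.val ∨ (a.val = 0 ∧ b.val = n - 1) →
      PolyAdj n a b := by
    intro a b h
    rcases h with h | ⟨h0, h1⟩
    · exact Or.inl (by rw [Nat.mod_eq_of_lt (h ▸ b.isLt)]; exact h)
    · refine Or.inr ?_
      rw [h1, h0]
      have : n - 1 + 1 = n := by omega
      rw [this, Nat.mod_self]
  have hadj' : ∀ (a b : Fin n), M.chord a b →
      a.val + 2 ≤ b.val ∧ b.val + 1 ≤ n ∧ ¬(a.val = 0 ∧ b.val = n - 1) := by
    intro a b h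
    have hlt : a.val < b.val := M.lt_of_chord a b h
    have hnp := M.not_poly a b h
    refine ⟨?_, b.isLt, ?_⟩
    · by_contra hcon
      exact hnp (hadj a b (Or.inl (by omega)))
    · intro hw
      exact hnp (hadj a b (Or.inr hw))
  set P : StmtAux.Poly n :=
    { E := fun a b => ∃ (ha : a < n) (hb : b < n), M.chord ⟨a, ha⟩ ⟨b, hb⟩
      gap := by
        rintro a b ⟨ha, hb, hch⟩
        have := hadj' _ _ hch
        simp only at this
        omega
      nowrap := by
        rintro a b ⟨ha, hb, hch⟩ hw
        exact (hadj' _ _ hch).2.2 hw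
      noncross := by
        rintro a b c d ⟨ha, hb, hab⟩ ⟨hc, hd, hcd⟩ hX
        refine M.noncross _ _ _ _ hab hcd ?_
        rcases hX with ⟨h1, h2, h3⟩ | ⟨h1, h2, h3⟩
        · exact Or.inl ⟨h1, h2, h3⟩
        · exact Or.inr ⟨h1, h2, h3⟩
      maximal := by
        intro a b h2 hbn hnw hnE
        have ha : a < n := by omega
        have hb : b < n := by omega
        have hnch : ¬ M.chord ⟨a, ha⟩ ⟨b, hb⟩ := fun h => hnE ⟨ha, hb, h⟩
        have hnadj : ¬ PolyAdj n ⟨a, ha⟩ ⟨b, hb⟩ := by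
          intro hp
          rcases hp with hp | hp
          · simp only at hp
            rw [Nat.mod_eq_of_lt (by omega)] at hp
            omega
          · simp only at hp
            by_cases hbe : b = n - 1
            · rw [hbe] at hp
              have : n - 1 + 1 = n := by omega
              rw [this, Nat.mod_self] at hp
              exact hnw ⟨hp.symm, hbe⟩
            · rw [Nat.mod_eq_of_lt (by omega)] at hp
              omega
        obtain ⟨c, d, hcd, hX⟩ := M.maximal _ _ (Fin.mk_lt_mk.2 (by omega)) hnadj hnch
        have hltcd := M.lt_of_chord _ _ hcd
        refine ⟨c.val, d.val, ⟨c.isLt, d.isLt, by simpa using hcd⟩, ?_⟩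
        rcases hX with ⟨h1', h2', h3'⟩ | ⟨h1', h2', h3'⟩
        · exact Or.inl ⟨h1', h2', h3'⟩
        · exact Or.inr ⟨h1', h2', h3'⟩ } with hP
  obtain ⟨S, hlt, hind, hcard⟩ := StmtAux.poly_good P hn
  refine ⟨S.attachFin hlt, ?_, ?_⟩
  · intro a ha b hb hch
    have haS : a.val ∈ S := (Finset.mem_attachFin hlt).1 ha
    have hbS : b.val ∈ S := (Finset.mem_attachFin hlt).1 hb
    exact hind a.val haS b.val hbS ⟨a.isLt, b.isLt, by simpa using hch⟩
  · rw [Finset.card_attachFin]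
    omega
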